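/- With Q_{ij}(z) defined as the metric coefficients from e^{Az}, for every z ∈ ℝ and every p = (p₁, p₂) ∈ ℝ², the symmetric 2×2 matrix [[Q₂₂(z)+p₂², Q₁₂(z)-p₁p₂],[Q₁₂(z)-p₁p₂, Q₁₁(z)+p₁²]] is positive definite. -/

import Mathlib

/-- The matrix exponential `e^{Az}`. -/
noncomputable def expA (A : Matrix (Fin 2) (Fin 2) ℝ) (z : ℝ) : Matrix (Fin 2) (Fin 2) ℝ :=
  NormedSpace.exp (z • A)


/-- Metric coefficient `Q₁₁`. -/
noncomputable def Q11 (A : Matrix (Fin 2) (Fin 2) ℝ) (z : ℝ) : ℝ :=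
  Real.exp (-2 * z * A.trace) * ((expA A z 1 0) ^ 2 + (expA A z 1 1) ^ 2)

/-- Metric coefficient `Q₂₂`. -/
noncomputable def Q22 (A : Matrix (Fin 2) (Fin 2) ℝ) (z : ℝ) : ℝ :=
  Real.exp (-2 * z * A.trace) * ((expA A z 0 0) ^ 2 + (expA A z 0 1) ^ 2)

/-- Metric coefficient `Q₁₂`. -/
noncomputable def Q12 (A : Matrix (Fin 2) (Fin 2) ℝ) (z : ℝ) : ℝ :=
  -(Real.exp (-2 * z * A.trace) *
    ((expA A z 0 0) * (expA A z 1 0) + (expA A z 0 1) * (expA A z 1 1)))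

theorem mean_curvature_matrix_posDef (A : Matrix (Fin 2) (Fin 2) ℝ) (z : ℝ) (p₁ p₂ : ℝ) :
    (!![Q22 A z + p₂ ^ 2, Q12 A z - p₁ * p₂;
        Q12 A z - p₁ * p₂, Q11 A z + p₁ ^ 2]).PosDef := by
  have hU : IsUnit (expA A z) := Matrix.isUnit_exp (z • A)
  have hdet : (expA A z).det ≠ 0 :=
    ((Matrix.isUnit_iff_isUnit_det _).mp hU).ne_zero
  rw [Matrix.det_fin_two] at hdet
  set a : ℝ := expA A z 0 0
  set b : ℝ := expA A z 0 1
  set cc : ℝ := expA A z 1 0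
  set d : ℝ := expA A z 1 1
  have hc : 0 < Real.exp (-2 * z * A.trace) := Real.exp_pos _
  rw [Matrix.posDef_iff_dotProduct_mulVec]
  constructor
  · unfold Matrix.IsHermitian
    ext i j
    fin_cases i <;> fin_cases j <;> simp [Matrix.conjTranspose_apply]
  · intro x hx
    have hform : dotProduct (star x)
        ((!![Q22 A z + p₂ ^ 2, Q12 A z - p₁ * p₂;
            Q12 A z - p₁ * p₂, Q11 A z + p₁ ^ 2]).mulVec x) =
        Real.exp (-2 * z * A.trace) * ((x 0 * a - x 1 * cc) ^ 2 + (x 0 * b - x 1 * d) ^ 2)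
          + (p₂ * x 0 - p₁ * x 1) ^ 2 := by
      simp [dotProduct, Matrix.mulVec, Fin.sum_univ_two, Q11, Q22, Q12, a, b, cc, d]
      ring_nf
    rw [hform]
    set s1 : ℝ := x 0 * a - x 1 * cc with hs1
    set s2 : ℝ := x 0 * b - x 1 * d with hs2
    rcases eq_or_ne s1 0 with h1 | h1
    · rcases eq_or_ne s2 0 with h2 | h2
      · exfalso
        apply hx
        have hx0 : x 0 = 0 := by
          have h : (a * d - b * cc) * x 0 = d * s1 - cc * s2 := by rw [hs1, hs2]; ring
          rw [h1, h2] at h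
          simpa using mul_eq_zero.mp (by linarith : (a * d - b * cc) * x 0 = 0)
            |>.resolve_left hdet
        have hx1 : x 1 = 0 := by
          have h : (a * d - b * cc) * x 1 = b * s1 - a * s2 := by rw [hs1, hs2]; ring
          rw [h1, h2] at h
          simpa using mul_eq_zero.mp (by linarith : (a * d - b * cc) * x 1 = 0)
            |>.resolve_left hdet
        funext i
        fin_cases i <;> simp [hx0, hx1]
      · have : 0 < s1 ^ 2 + s2 ^ 2 := by positivity
        nlinarith [sq_nonneg (p₂ * x 0 - p₁ * x 1)]
    · have : 0 < s1 ^ 2 + s2 ^ 2 := by positivity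
      nlinarith [sq_nonneg (p₂ * x 0 - p₁ * x 1)]
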